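/- Let ν ≥ 0 and x > 0, and define the Amos bound Γ_ν(x) = x / (√(x² + (ν + 3/2)²) + ν + 1/2). If Γ_{ν+1}^{2ν+1}(x) · (2(ν+1)/x + Γ_{ν+1}(x))^{2ν+3} > 1, then Ψ_ν^{2ν+3}(x) < Ψ_{ν+1}^{2ν+1}(x), where Ψ_ν(x) = I_{ν+1}(x)/I_ν(x); equivalently, under this hypothesis the Turán type inequality I_{ν+1}^{4ν+4}(x) < I_{ν+2}^{2ν+1}(x) · I_ν^{2ν+3}(x) holds. -/

import Mathlib

open Real Filter Topology

/-- The modified Bessel function of the first kind of real order `ν`. -/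
noncomputable def besselI (ν x : ℝ) : ℝ :=
  ∑' m : ℕ, (x / 2) ^ (2 * (m : ℝ) + ν) / ((m.factorial : ℝ) * Real.Gamma ((m : ℝ) + ν + 1))

/-- `Ψ_ν(x) = I_{ν+1}(x) / I_ν(x)`. -/
noncomputable def psi (ν x : ℝ) : ℝ := besselI (ν + 1) x / besselI ν x

/-- The Amos lower bound `Γ_ν(x) = x / (√(x² + (ν + 3/2)²) + ν + 1/2)`. -/
noncomputable def amosGamma (ν x : ℝ) : ℝ :=
  x / (Real.sqrt (x ^ 2 + (ν + 3 / 2) ^ 2) + ν + 1 / 2)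

open Finset


noncomputable def bt (ν x : ℝ) (m : ℕ) : ℝ :=
  (x / 2) ^ (2 * (m : ℝ) + ν) / ((m.factorial : ℝ) * Real.Gamma ((m : ℝ) + ν + 1))

lemma gamma_arg_pos (ν : ℝ) (hν : 0 ≤ ν) (m : ℕ) : 0 < Real.Gamma ((m : ℝ) + ν + 1) := by
  apply Real.Gamma_pos_of_pos; positivity

lemma bt_pos (ν x : ℝ) (hν : 0 ≤ ν) (hx : 0 < x) (m : ℕ) : 0 < bt ν x m := by
  unfold bt
  have := gamma_arg_pos ν hν m
  have h2 : (0:ℝ) < x / 2 := by linarith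
  have : (0:ℝ) < (x/2) ^ (2 * (m : ℝ) + ν) := Real.rpow_pos_of_pos h2 _
  have hf : (0:ℝ) < (m.factorial : ℝ) := by positivity
  positivity

lemma bt_succ (ν x : ℝ) (hν : 0 ≤ ν) (hx : 0 < x) (m : ℕ) :
    bt ν x (m + 1) = bt ν x m * ((x/2)^2 / (((m:ℝ)+1) * ((m:ℝ)+ν+1))) := by
  have h2 : (0:ℝ) < x / 2 := by linarith
  have hne : (m:ℝ) + ν + 1 ≠ 0 := by positivity
  have hg : Real.Gamma ((m:ℝ) + 1 + ν + 1) = ((m:ℝ)+ν+1) * Real.Gamma ((m:ℝ)+ν+1) := by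
    have : (m:ℝ) + 1 + ν + 1 = ((m:ℝ) + ν + 1) + 1 := by ring
    rw [this, Real.Gamma_add_one hne]
  have hr : (x/2) ^ (2 * ((m:ℝ)+1) + ν) = (x/2) ^ (2 * (m:ℝ) + ν) * (x/2)^2 := by
    rw [← Real.rpow_natCast (x/2) 2, ← Real.rpow_add h2]
    norm_num; ring_nf
  unfold bt
  push_cast [Nat.factorial_succ]
  rw [hg, hr]
  have := gamma_arg_pos ν hν m
  have hf : (0:ℝ) < (m.factorial : ℝ) := by positivity
  field_simp

lemma summable_bt (ν x : ℝ) (hν : 0 ≤ ν) (hx : 0 < x) : Summable (bt ν x) := by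
  apply summable_of_ratio_norm_eventually_le (r := 1/2) (by norm_num)
  filter_upwards [Filter.eventually_ge_atTop (Nat.ceil (x^2))] with m hm
  have hb := bt_pos ν x hν hx m
  have hb1 := bt_pos ν x hν hx (m+1)
  rw [Real.norm_of_nonneg hb.le, Real.norm_of_nonneg hb1.le, bt_succ ν x hν hx m]
  rw [mul_comm ((1:ℝ)/2) _]
  apply mul_le_mul_of_nonneg_left _ hb.le
  have hm' : (x^2 : ℝ) ≤ (m:ℝ) := le_trans (Nat.le_ceil _) (by exact_mod_cast hm)
  have h1 : ((m:ℝ)+1) * ((m:ℝ)+ν+1) ≥ (m:ℝ) + 1 := by nlinarith [Nat.cast_nonneg (α := ℝ) m]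
  have h0 : (0:ℝ) < (m:ℝ)+1 := by positivity
  have h0' : (0:ℝ) < ((m:ℝ)+1) * ((m:ℝ)+ν+1) := by nlinarith
  rw [div_le_iff₀ h0']
  nlinarith [sq_nonneg x]

lemma besselI_eq (ν x : ℝ) : besselI ν x = ∑' m, bt ν x m := rfl


lemma besselI_pos (ν x : ℝ) (hν : 0 ≤ ν) (hx : 0 < x) : 0 < besselI ν x := by
  rw [besselI_eq]
  exact Summable.tsum_pos (summable_bt ν x hν hx) (fun m => (bt_pos ν x hν hx m).le) 0
    (bt_pos ν x hν hx 0)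

lemma besselI_rec (ν x : ℝ) (hν : 0 ≤ ν) (hx : 0 < x) :
    besselI ν x = 2 * (ν + 1) / x * besselI (ν + 1) x + besselI (ν + 2) x := by
  have h2 : (0:ℝ) < x / 2 := by linarith
  have key : ∀ m : ℕ, bt ν x m - 2 * (ν+1)/x * bt (ν+1) x m =
      if m = 0 then 0 else bt (ν+2) x (m-1) := by
    intro m
    match m with
    | 0 =>
      simp only [if_pos rfl, ↓reduceIte]
      unfold bt
      have hg : Real.Gamma ((0:ℕ) + ν + 1 + 1) = (ν+1) * Real.Gamma ((0:ℕ)+ν+1) := by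
        rw [Real.Gamma_add_one (by push_cast; positivity)]
        push_cast; ring_nf
      have harg : ((0:ℕ):ℝ) + (ν+1) + 1 = ((0:ℕ):ℝ) + ν + 1 + 1 := by ring
      have hr : (x/2) ^ (2 * ((0:ℕ):ℝ) + (ν+1)) = (x/2) ^ (2 * ((0:ℕ):ℝ) + ν) * (x/2) := by
        have e : 2 * ((0:ℕ):ℝ) + (ν+1) = (2 * ((0:ℕ):ℝ) + ν) + 1 := by ring
        rw [e, Real.rpow_add_one h2.ne']
      rw [harg, hg, hr]
      have hgp := gamma_arg_pos ν hν 0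
      field_simp
      ring
    | Nat.succ k =>
      simp only [Nat.succ_ne_zero, if_neg, Nat.succ_sub_one]
      unfold bt
      have hgp := gamma_arg_pos ν hν (k+1)
      have hne : ((k+1:ℕ):ℝ) + ν + 1 ≠ 0 := by push_cast; positivity
      have hg : Real.Gamma (((k+1:ℕ):ℝ) + (ν+1) + 1) = (((k:ℝ))+ν+2) * Real.Gamma (((k+1:ℕ):ℝ)+ν+1) := by
        have e : ((k+1:ℕ):ℝ) + (ν+1) + 1 = (((k+1:ℕ):ℝ) + ν + 1) + 1 := by ring
        rw [e, Real.Gamma_add_one hne]; push_cast; ring_nf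
      have hg2 : Real.Gamma (((k:ℕ):ℝ) + (ν+2) + 1) = Real.Gamma (((k+1:ℕ):ℝ)+ν+1+1) := by
        norm_num; ring_nf
      have hg2' : Real.Gamma (((k+1:ℕ):ℝ)+ν+1+1) = (((k:ℝ))+ν+2) * Real.Gamma (((k+1:ℕ):ℝ)+ν+1) := by
        rw [Real.Gamma_add_one hne]; push_cast; ring_nf
      have hr : (x/2) ^ (2 * ((k+1:ℕ):ℝ) + (ν+1)) = (x/2) ^ (2 * ((k+1:ℕ):ℝ) + ν) * (x/2) := by
        have e : 2 * ((k+1:ℕ):ℝ) + (ν+1) = (2 * ((k+1:ℕ):ℝ) + ν) + 1 := by ring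
        rw [e, Real.rpow_add_one h2.ne']
      have hr2 : (x/2) ^ (2 * ((k:ℕ):ℝ) + (ν+2)) = (x/2) ^ (2 * ((k+1:ℕ):ℝ) + ν) := by
        push_cast; ring_nf
      rw [hg, hg2, hg2', hr, hr2]
      push_cast [Nat.factorial_succ]
      have hfk : (0:ℝ) < (k.factorial : ℝ) := by positivity
      have hga := gamma_arg_pos ν hν (k+1)
      field_simp
      ring
  have hs1 := summable_bt ν x hν hx
  have hs2 := (summable_bt (ν+1) x (by linarith) hx).mul_left (2*(ν+1)/x)
  have hs3 := summable_bt (ν+2) x (by linarith) hx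
  have hdiff : besselI ν x - 2 * (ν + 1) / x * besselI (ν + 1) x = besselI (ν+2) x := by
    rw [besselI_eq, besselI_eq, besselI_eq, ← tsum_mul_left, ← Summable.tsum_sub hs1 hs2]
    have : ∀ m : ℕ, bt ν x m - 2*(ν+1)/x * bt (ν+1) x m =
        (fun m => if m = 0 then 0 else bt (ν+2) x (m-1)) m := key
    rw [tsum_congr this]
    rw [Summable.tsum_eq_zero_add]
    · norm_num
    · apply Summable.congr ((hs1.sub hs2))
      intro m; exact key m
  linarith [hdiff]

noncomputable def Rc (k : ℕ) (a b : ℝ) : ℝ :=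
  Real.Gamma (2*(k:ℝ)+a+b+1) /
    ((k.factorial : ℝ) * Real.Gamma ((k:ℝ)+a+1) * Real.Gamma ((k:ℝ)+b+1) * Real.Gamma ((k:ℝ)+a+b+1))

lemma Rc_pos (k : ℕ) (a b : ℝ) (ha : 0 ≤ a) (hb : 0 ≤ b) : 0 < Rc k a b := by
  unfold Rc
  have h1 : (0:ℝ) < Real.Gamma (2*(k:ℝ)+a+b+1) := Real.Gamma_pos_of_pos (by positivity)
  have h2 : (0:ℝ) < Real.Gamma ((k:ℝ)+a+1) := Real.Gamma_pos_of_pos (by positivity)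
  have h3 : (0:ℝ) < Real.Gamma ((k:ℝ)+b+1) := Real.Gamma_pos_of_pos (by positivity)
  have h4 : (0:ℝ) < Real.Gamma ((k:ℝ)+a+b+1) := Real.Gamma_pos_of_pos (by positivity)
  have h5 : (0:ℝ) < (k.factorial : ℝ) := by positivity
  positivity

lemma shift_sum (k : ℕ) (a b : ℝ) (ha : 0 ≤ a) (hb : 0 ≤ b) :
    ∑ i ∈ range (k+2), (i:ℝ) *
      (1 / ((i.factorial:ℝ) * (((k+1-i).factorial):ℝ) * Real.Gamma ((i:ℝ)+a+1) * Real.Gamma (((k+1-i : ℕ):ℝ)+b+1)))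
    = ∑ i ∈ range (k+1),
      1 / ((i.factorial:ℝ) * (((k-i).factorial):ℝ) * Real.Gamma ((i:ℝ)+(a+1)+1) * Real.Gamma (((k-i : ℕ):ℝ)+b+1)) := by
  rw [Finset.sum_range_succ']
  norm_num
  apply Finset.sum_congr rfl
  intro i hi
  have h1 : k + 1 - (i+1) = k - i := by omega
  have h2 : ((i+1).factorial : ℝ) = ((i:ℝ)+1) * (i.factorial : ℝ) := by
    push_cast [Nat.factorial_succ]; ring
  have hi1 : (0:ℝ) < (i:ℝ) + 1 := by positivity
  have hfi : (0:ℝ) < (i.factorial : ℝ) := by positivity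
  have hfk : (0:ℝ) < (((k-i).factorial) : ℝ) := by positivity
  have hg1 : (0:ℝ) < Real.Gamma ((i:ℝ)+(a+1)+1) := Real.Gamma_pos_of_pos (by have := Nat.cast_nonneg (α := ℝ) i; linarith)
  have hg2 : (0:ℝ) < Real.Gamma (((k-i:ℕ):ℝ)+b+1) := Real.Gamma_pos_of_pos (by have := Nat.cast_nonneg (α := ℝ) (k-i); linarith)
  rw [h1, h2, show (i:ℝ)+1+a+1 = (i:ℝ)+(a+1)+1 by ring]
  push_cast
  field_simp

lemma vand : ∀ (k : ℕ) (a b : ℝ), 0 ≤ a → 0 ≤ b →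
    ∑ i ∈ range (k+1),
      1 / ((i.factorial : ℝ) * ((k-i).factorial : ℝ) * Real.Gamma ((i:ℝ)+a+1) * Real.Gamma (((k-i : ℕ):ℝ)+b+1))
      = Rc k a b := by
  intro k
  induction k with
  | zero =>
    intro a b ha hb
    have h4 : (0:ℝ) < Real.Gamma (a+b+1) := Real.Gamma_pos_of_pos (by positivity)
    have h2 : (0:ℝ) < Real.Gamma (a+1) := Real.Gamma_pos_of_pos (by positivity)
    have h3 : (0:ℝ) < Real.Gamma (b+1) := Real.Gamma_pos_of_pos (by positivity)
    simp only [Rc]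
    norm_num
    field_simp
  | succ k ih =>
    intro a b ha hb
    set t : ℕ → ℝ := fun i =>
      1 / ((i.factorial : ℝ) * (((k+1)-i).factorial : ℝ) * Real.Gamma ((i:ℝ)+a+1) * Real.Gamma ((((k+1)-i : ℕ):ℝ)+b+1)) with ht
    have hmain : ((k:ℝ)+1) * (∑ i ∈ range (k+2), t i) = Rc k (a+1) b + Rc k a (b+1) := by
      rw [Finset.mul_sum]
      have split : ∀ i ∈ range (k+2), ((k:ℝ)+1) * t i = (i:ℝ) * t i + (((k+1-i : ℕ)):ℝ) * t i := by
        intro i hi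
        have hle : i ≤ k+1 := by simpa [Nat.lt_succ_iff] using hi
        have : (((k+1-i : ℕ)):ℝ) = (k:ℝ) + 1 - (i:ℝ) := by
          push_cast [Nat.cast_sub hle]; ring
        rw [this]; ring
      rw [Finset.sum_congr rfl split, Finset.sum_add_distrib]
      congr 1
      · rw [ht]
        rw [shift_sum k a b ha hb]
        exact ih (a+1) b (by linarith) hb
      · -- reflect
        have refl1 : ∑ i ∈ range (k+2), (((k+1-i : ℕ)):ℝ) * t i
            = ∑ i ∈ range (k+2), (i:ℝ) *
              (1 / ((i.factorial:ℝ) * (((k+1-i).factorial):ℝ) * Real.Gamma ((i:ℝ)+b+1) * Real.Gamma (((k+1-i : ℕ):ℝ)+a+1))) := by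
          rw [← Finset.sum_range_reflect]
          apply Finset.sum_congr rfl
          intro i hi
          have hle : i ≤ k+1 := by simpa [Nat.lt_succ_iff] using hi
          have e1 : k + 1 - (k + 1 - i) = i := by omega
          have e2 : k + 2 - 1 - i = k + 1 - i := by omega
          rw [e2, ht]
          simp only [e1]
          ring
        rw [refl1, shift_sum k b a hb ha, ih (b+1) a (by linarith) ha]
        unfold Rc
        ring_nf
    have hR : Rc k (a+1) b + Rc k a (b+1) = ((k:ℝ)+1) * Rc (k+1) a b := by
      have grec : ∀ u : ℝ, 0 < u → Real.Gamma (u+1) = u * Real.Gamma u :=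
        fun u hu => Real.Gamma_add_one hu.ne'
      have hk0 : (0:ℝ) ≤ (k:ℝ) := Nat.cast_nonneg k
      have hk0' : (0:ℝ) ≤ (k:ℝ) := Nat.cast_nonneg k
      have g1 : (0:ℝ) < Real.Gamma ((k:ℝ)+a+1) := Real.Gamma_pos_of_pos (by linarith)
      have g2 : (0:ℝ) < Real.Gamma ((k:ℝ)+b+1) := Real.Gamma_pos_of_pos (by linarith)
      have g3 : (0:ℝ) < Real.Gamma ((k:ℝ)+a+b+1) := Real.Gamma_pos_of_pos (by linarith)
      have g4 : (0:ℝ) < Real.Gamma (2*(k:ℝ)+a+b+1) := Real.Gamma_pos_of_pos (by linarith)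
      have hf : (0:ℝ) < (k.factorial : ℝ) := by positivity
      unfold Rc
      push_cast [Nat.factorial_succ]
      rw [show 2*(k:ℝ)+(a+1)+b+1 = (2*(k:ℝ)+a+b+1)+1 by ring,
        show 2*(k:ℝ)+a+(b+1)+1 = (2*(k:ℝ)+a+b+1)+1 by ring,
        show (k:ℝ)+(a+1)+1 = ((k:ℝ)+a+1)+1 by ring,
        show (k:ℝ)+(b+1)+1 = ((k:ℝ)+b+1)+1 by ring,
        show (k:ℝ)+(a+1)+b+1 = ((k:ℝ)+a+b+1)+1 by ring,
        show (k:ℝ)+a+(b+1)+1 = ((k:ℝ)+a+b+1)+1 by ring,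
        show 2*((k:ℝ)+1)+a+b+1 = ((2*(k:ℝ)+a+b+1)+1)+1 by ring,
        show (k:ℝ)+1+a+1 = ((k:ℝ)+a+1)+1 by ring,
        show (k:ℝ)+1+b+1 = ((k:ℝ)+b+1)+1 by ring,
        show (k:ℝ)+1+a+b+1 = ((k:ℝ)+a+b+1)+1 by ring]
      rw [grec ((2*(k:ℝ)+a+b+1)+1) (by linarith)]
      rw [grec (2*(k:ℝ)+a+b+1) (by linarith)]
      rw [grec ((k:ℝ)+a+1) (by linarith)]
      rw [grec ((k:ℝ)+b+1) (by linarith)]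
      rw [grec ((k:ℝ)+a+b+1) (by linarith)]
      set_option maxHeartbeats 1600000 in
      field_simp
      set_option maxHeartbeats 1600000 in
      ring
    have hk1 : ((k:ℝ)+1) ≠ 0 := by positivity
    exact mul_left_cancel₀ hk1 (hmain.trans hR)


lemma summable_norm_bt (ν x : ℝ) (hν : 0 ≤ ν) (hx : 0 < x) :
    Summable (fun m => ‖bt ν x m‖) := by
  apply (summable_bt ν x hν hx).congr
  intro m
  exact (Real.norm_of_nonneg (bt_pos ν x hν hx m).le).symm

lemma bt_mul_bt (α β x : ℝ) (hα : 0 ≤ α) (hβ : 0 ≤ β) (hx : 0 < x) (k : ℕ) :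
    ∑ i ∈ range (k+1), bt α x i * bt β x (k-i)
      = (x/2) ^ (2*(k:ℝ)+(α+β)) * Rc k α β := by
  have h2 : (0:ℝ) < x/2 := by linarith
  rw [← vand k α β hα hβ, Finset.mul_sum]
  apply Finset.sum_congr rfl
  intro i hi
  have hle : i ≤ k := by simpa [Nat.lt_succ_iff] using hi
  unfold bt
  rw [div_mul_div_comm, ← Real.rpow_add h2]
  rw [show 2*(i:ℝ)+α + (2*(((k-i:ℕ)):ℝ)+β) = 2*(k:ℝ)+(α+β) by
    push_cast [Nat.cast_sub hle]; ring]
  rw [mul_one_div]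
  congr 1
  ring

lemma besselI_mul (α β x : ℝ) (hα : 0 ≤ α) (hβ : 0 ≤ β) (hx : 0 < x) :
    besselI α x * besselI β x = ∑' k : ℕ, (x/2) ^ (2*(k:ℝ)+(α+β)) * Rc k α β := by
  rw [besselI_eq, besselI_eq,
    tsum_mul_tsum_eq_tsum_sum_range_of_summable_norm
      (summable_norm_bt α x hα hx) (summable_norm_bt β x hβ hx)]
  exact tsum_congr (fun k => bt_mul_bt α β x hα hβ hx k)

lemma summable_prod (α β x : ℝ) (hα : 0 ≤ α) (hβ : 0 ≤ β) (hx : 0 < x) :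
    Summable (fun k : ℕ => (x/2) ^ (2*(k:ℝ)+(α+β)) * Rc k α β) := by
  have h := (summable_norm_sum_mul_range_of_summable_norm
      (summable_norm_bt α x hα hx) (summable_norm_bt β x hβ hx)).of_norm
  apply h.congr
  intro k
  exact bt_mul_bt α β x hα hβ hx k

lemma key_ineq (μ : ℝ) (hμ : 0 ≤ μ) (k : ℕ) :
    2 * Rc k (μ+1) (μ+1) + (2*μ+1) * Rc (k+1) μ (μ+1) ≤ 2 * Rc (k+1) μ μ := by
  have grec : ∀ u : ℝ, 0 < u → Real.Gamma (u+1) = u * Real.Gamma u :=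
    fun u hu => Real.Gamma_add_one hu.ne'
  have hk0 : (0:ℝ) ≤ (k:ℝ) := Nat.cast_nonneg k
  have hmargin : 2 * Rc (k+1) μ μ - (2 * Rc k (μ+1) (μ+1) + (2*μ+1) * Rc (k+1) μ (μ+1))
      = (2*μ+1) * Real.Gamma (2*(k:ℝ)+2*μ+3) /
        ((((k:ℝ)+1) * (k.factorial:ℝ)) * (Real.Gamma ((k:ℝ)+μ+2))^2 * ((k:ℝ)+μ+2)
          * ((k:ℝ)+2*μ+2) * Real.Gamma ((k:ℝ)+2*μ+2)) := by
    unfold Rc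
    push_cast [Nat.factorial_succ]
    rw [show 2*(k:ℝ)+(μ+1)+(μ+1)+1 = 2*(k:ℝ)+2*μ+3 by ring,
      show (k:ℝ)+(μ+1)+1 = (k:ℝ)+μ+2 by ring,
      show (k:ℝ)+(μ+1)+(μ+1)+1 = ((k:ℝ)+2*μ+2)+1 by ring,
      show 2*((k:ℝ)+1)+μ+(μ+1)+1 = (2*(k:ℝ)+2*μ+3)+1 by ring,
      show (k:ℝ)+1+μ+1 = (k:ℝ)+μ+2 by ring,
      show (k:ℝ)+1+(μ+1)+1 = ((k:ℝ)+μ+2)+1 by ring,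
      show (k:ℝ)+1+μ+(μ+1)+1 = ((k:ℝ)+2*μ+2)+1 by ring,
      show 2*((k:ℝ)+1)+μ+μ+1 = 2*(k:ℝ)+2*μ+3 by ring,
      show (k:ℝ)+1+μ+μ+1 = (k:ℝ)+2*μ+2 by ring]
    rw [grec (2*(k:ℝ)+2*μ+3) (by linarith), grec ((k:ℝ)+μ+2) (by linarith),
      grec ((k:ℝ)+2*μ+2) (by linarith)]
    have g1 : (0:ℝ) < Real.Gamma ((k:ℝ)+μ+2) := Real.Gamma_pos_of_pos (by linarith)
    have g2 : (0:ℝ) < Real.Gamma ((k:ℝ)+2*μ+2) := Real.Gamma_pos_of_pos (by linarith)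
    have g3 : (0:ℝ) < Real.Gamma (2*(k:ℝ)+2*μ+3) := Real.Gamma_pos_of_pos (by linarith)
    have hf : (0:ℝ) < (k.factorial : ℝ) := by positivity
    field_simp
    ring
  have hpos : (0:ℝ) < (2*μ+1) * Real.Gamma (2*(k:ℝ)+2*μ+3) /
        ((((k:ℝ)+1) * (k.factorial:ℝ)) * (Real.Gamma ((k:ℝ)+μ+2))^2 * ((k:ℝ)+μ+2)
          * ((k:ℝ)+2*μ+2) * Real.Gamma ((k:ℝ)+2*μ+2)) := by
    have g1 : (0:ℝ) < Real.Gamma ((k:ℝ)+μ+2) := Real.Gamma_pos_of_pos (by linarith)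
    have g2 : (0:ℝ) < Real.Gamma ((k:ℝ)+2*μ+2) := Real.Gamma_pos_of_pos (by linarith)
    have g3 : (0:ℝ) < Real.Gamma (2*(k:ℝ)+2*μ+3) := Real.Gamma_pos_of_pos (by linarith)
    have hf : (0:ℝ) < (k.factorial : ℝ) := by positivity
    have h1 : (0:ℝ) < (k:ℝ)+μ+2 := by linarith
    have h2 : (0:ℝ) < (k:ℝ)+2*μ+2 := by linarith
    have h3 : (0:ℝ) < 2*μ+1 := by linarith
    have h4 : (0:ℝ) < (k:ℝ)+1 := by linarith
    positivity
  linarith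

lemma head_ineq (μ : ℝ) (hμ : 0 ≤ μ) : (2*μ+1) * Rc 0 μ (μ+1) < 2 * Rc 0 μ μ := by
  have grec : ∀ u : ℝ, 0 < u → Real.Gamma (u+1) = u * Real.Gamma u :=
    fun u hu => Real.Gamma_add_one hu.ne'
  unfold Rc
  push_cast
  rw [show 2*(0:ℝ)+μ+(μ+1)+1 = (2*μ+1)+1 by ring,
    show (0:ℝ)+(μ+1)+1 = (μ+1)+1 by ring,
    show (0:ℝ)+μ+(μ+1)+1 = (2*μ+1)+1 by ring,
    show 2*(0:ℝ)+μ+μ+1 = 2*μ+1 by ring,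
    show (0:ℝ)+μ+μ+1 = 2*μ+1 by ring,
    show (0:ℝ)+μ+1 = μ+1 by ring]
  rw [grec (2*μ+1) (by linarith), grec (μ+1) (by linarith)]
  have g1 : (0:ℝ) < Real.Gamma (μ+1) := Real.Gamma_pos_of_pos (by linarith)
  have g2 : (0:ℝ) < Real.Gamma (2*μ+1) := Real.Gamma_pos_of_pos (by linarith)
  rw [Nat.factorial_zero]
  push_cast
  have h1 : (0:ℝ) < μ+1 := by linarith
  have h2 : (0:ℝ) < 2*μ+1 := by linarith
  have hd1 : (0:ℝ) < 1 * Real.Gamma (μ+1) * ((μ+1) * Real.Gamma (μ+1)) * ((2*μ+1) * Real.Gamma (2*μ+1)) :=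
    mul_pos (mul_pos (mul_pos one_pos g1) (mul_pos h1 g1)) (mul_pos h2 g2)
  have hd2 : (0:ℝ) < 1 * Real.Gamma (μ+1) * Real.Gamma (μ+1) * Real.Gamma (2*μ+1) :=
    mul_pos (mul_pos (mul_pos one_pos g1) g1) g2
  rw [← mul_div_assoc, ← mul_div_assoc, div_lt_div_iff₀ hd1 hd2]
  nlinarith [mul_pos h2 (mul_pos (mul_pos g1 g1) (mul_pos g2 g2)), hμ,
    mul_pos (mul_pos g1 g1) (mul_pos g2 g2)]


lemma U_ineq (μ x : ℝ) (hμ : 0 ≤ μ) (hx : 0 < x) :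
    x * (besselI (μ+1) x * besselI (μ+1) x) + (2*μ+1) * (besselI μ x * besselI (μ+1) x)
      < x * (besselI μ x * besselI μ x) := by
  have h2 : (0:ℝ) < x/2 := by linarith
  have hμ1 : (0:ℝ) ≤ μ+1 := by linarith
  set E : ℕ → ℝ := fun k => (x/2) ^ (2*(k:ℝ)+2*μ+1) with hE
  have hEpos : ∀ k, 0 < E k := fun k => Real.rpow_pos_of_pos h2 _
  have hxpow : ∀ c : ℝ, x * (x/2)^c = 2*(x/2)^(c+1) := by
    intro c; rw [Real.rpow_add_one h2.ne']; ring
  set F1 : ℕ → ℝ := fun k => 2 * E k * Rc k μ μ with hF1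
  set F2 : ℕ → ℝ := fun k => (2*μ+1) * E k * Rc k μ (μ+1) with hF2
  set F3 : ℕ → ℝ := fun k => 2 * E (k+1) * Rc k (μ+1) (μ+1) with hF3
  have e1 : ∀ k : ℕ, x * ((x/2) ^ (2*(k:ℝ)+(μ+μ)) * Rc k μ μ) = F1 k := by
    intro k
    rw [← mul_assoc, hxpow, hF1, hE]
    simp only []
    rw [show 2*(k:ℝ)+(μ+μ)+1 = 2*(k:ℝ)+2*μ+1 by ring]
  have e2 : ∀ k : ℕ, (2*μ+1) * ((x/2) ^ (2*(k:ℝ)+(μ+(μ+1))) * Rc k μ (μ+1)) = F2 k := by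
    intro k
    rw [hF2, hE]
    simp only []
    rw [show 2*(k:ℝ)+(μ+(μ+1)) = 2*(k:ℝ)+2*μ+1 by ring]
    ring
  have e3 : ∀ k : ℕ, x * ((x/2) ^ (2*(k:ℝ)+((μ+1)+(μ+1))) * Rc k (μ+1) (μ+1)) = F3 k := by
    intro k
    rw [← mul_assoc, hxpow, hF3, hE]
    simp only []
    rw [show 2*(k:ℝ)+((μ+1)+(μ+1))+1 = 2*((k:ℝ)+1)+2*μ+1 by ring]
    push_cast
    ring_nf
  have hS1 : x * (besselI μ x * besselI μ x) = ∑' k, F1 k := by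
    rw [besselI_mul μ μ x hμ hμ hx, ← tsum_mul_left]
    exact tsum_congr e1
  have hS2 : (2*μ+1) * (besselI μ x * besselI (μ+1) x) = ∑' k, F2 k := by
    rw [besselI_mul μ (μ+1) x hμ hμ1 hx, ← tsum_mul_left]
    exact tsum_congr e2
  have hS3 : x * (besselI (μ+1) x * besselI (μ+1) x) = ∑' k, F3 k := by
    rw [besselI_mul (μ+1) (μ+1) x hμ1 hμ1 hx, ← tsum_mul_left]
    exact tsum_congr e3
  have hsum1 : Summable F1 := by
    apply ((summable_prod μ μ x hμ hμ hx).mul_left x).congr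
    intro k; exact e1 k
  have hsum2 : Summable F2 := by
    apply ((summable_prod μ (μ+1) x hμ hμ1 hx).mul_left (2*μ+1)).congr
    intro k; exact e2 k
  have hsum3 : Summable F3 := by
    apply ((summable_prod (μ+1) (μ+1) x hμ1 hμ1 hx).mul_left x).congr
    intro k; exact e3 k
  have hsum2s : Summable (fun k => F2 (k+1)) := (summable_nat_add_iff 1).mpr hsum2
  have hsum1s : Summable (fun k => F1 (k+1)) := (summable_nat_add_iff 1).mpr hsum1
  rw [hS1, hS2, hS3]
  rw [Summable.tsum_eq_zero_add hsum2, Summable.tsum_eq_zero_add hsum1]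
  have hhead : F2 0 < F1 0 := by
    rw [hF1, hF2]
    simp only []
    have := head_ineq μ hμ
    have hE0 := hEpos 0
    calc (2*μ+1) * E 0 * Rc 0 μ (μ+1) = E 0 * ((2*μ+1) * Rc 0 μ (μ+1)) := by ring
    _ < E 0 * (2 * Rc 0 μ μ) := by exact mul_lt_mul_of_pos_left this hE0
    _ = 2 * E 0 * Rc 0 μ μ := by ring
  have htail : ∑' k, F3 k + ∑' k, F2 (k+1) ≤ ∑' k, F1 (k+1) := by
    rw [← Summable.tsum_add hsum3 hsum2s]
    apply Summable.tsum_le_tsum _ (hsum3.add hsum2s) hsum1s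
    intro k
    have hkey := key_ineq μ hμ k
    have hEk := hEpos (k+1)
    calc F3 k + F2 (k+1) = E (k+1) * (2 * Rc k (μ+1) (μ+1) + (2*μ+1) * Rc (k+1) μ (μ+1)) := by
          rw [hF3, hF2]; simp only []; ring
    _ ≤ E (k+1) * (2 * Rc (k+1) μ μ) := mul_le_mul_of_nonneg_left hkey hEk.le
    _ = F1 (k+1) := by rw [hF1]; simp only []; ring
  linarith


lemma amos_lt (μ x : ℝ) (hμ : 0 ≤ μ) (hx : 0 < x) : amosGamma μ x < psi μ x := by
  have hA := besselI_pos μ x hμ hx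
  have hB := besselI_pos (μ+1) x (by linarith) hx
  have hC := besselI_pos (μ+2) x (by linarith) hx
  set A := besselI μ x
  set B := besselI (μ+1) x
  set C := besselI (μ+2) x with hCdef
  have hU := U_ineq (μ+1) x (by linarith) hx
  rw [show μ+1+1 = μ+2 by ring, show 2*(μ+1)+1 = 2*μ+3 by ring] at hU
  -- hU : x*(C*C) + (2μ+3)*(B*C) < x*(B*B)
  have hrec := besselI_rec μ x hμ hx
  have hxA : x * A = 2*(μ+1) * B + x * C := by
    have h : A = 2*(μ+1)/x * B + C := hrec
    rw [h]; field_simp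
  set s := Real.sqrt (x^2 + (μ+3/2)^2) with hsdef
  have hs0 : 0 ≤ s := Real.sqrt_nonneg _
  have hs2 : s^2 = x^2 + (μ+3/2)^2 := Real.sq_sqrt (by positivity)
  have hsq : (x*C + (μ+3/2)*B)^2 < (s*B)^2 := by
    have hxU := mul_lt_mul_of_pos_left hU hx
    nlinarith [hxU, hs2, sq_nonneg B, mul_pos hB hC]
  have hlin : x*C + (μ+3/2)*B < s*B :=
    lt_of_pow_lt_pow_left₀ 2 (mul_nonneg hs0 hB.le) hsq
  have hxAlt : x * A < (s + μ + 1/2) * B := by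
    rw [hxA]; nlinarith [hlin]
  unfold amosGamma psi
  rw [div_lt_div_iff₀ (by positivity) hA]
  calc x * A < (s + μ + 1/2) * B := hxAlt
  _ = B * (Real.sqrt (x^2+(μ+3/2)^2) + μ + 1/2) := by rw [← hsdef]; ring

theorem stmt_19 (ν x : ℝ) (hν : 0 ≤ ν) (hx : 0 < x)
    (hyp : 1 < (amosGamma (ν + 1) x) ^ (2 * ν + 1) *
        (2 * (ν + 1) / x + amosGamma (ν + 1) x) ^ (2 * ν + 3)) :
    (psi ν x) ^ (2 * ν + 3) < (psi (ν + 1) x) ^ (2 * ν + 1) ∧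
    (besselI (ν + 1) x) ^ (4 * ν + 4) <
      (besselI (ν + 2) x) ^ (2 * ν + 1) * (besselI ν x) ^ (2 * ν + 3) := by
  have hA := besselI_pos ν x hν hx
  have hB := besselI_pos (ν+1) x (by linarith) hx
  have hC := besselI_pos (ν+2) x (by linarith) hx
  set A := besselI ν x
  set B := besselI (ν+1) x
  set C := besselI (ν+2) x
  have hG : 0 < amosGamma (ν+1) x := by
    unfold amosGamma
    apply div_pos hx
    have := Real.sqrt_nonneg (x^2 + (ν+1+3/2)^2)
    linarith
  set G := amosGamma (ν+1) x
  have hQdef : psi (ν+1) x = C / B := by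
    unfold psi
    rw [show ν+1+1 = ν+2 by ring]
  have hQ : 0 < psi (ν+1) x := by rw [hQdef]; exact div_pos hC hB
  set Q := psi (ν+1) x
  have hGQ : G < Q := amos_lt (ν+1) x (by linarith) hx
  have hPdef : psi ν x = B / A := rfl
  have hrec := besselI_rec ν x hν hx
  have hAB : 2*(ν+1)/x + Q = A / B := by
    have h : A = 2*(ν+1)/x * B + C := hrec
    rw [hQdef, h]
    field_simp
  have hp : (0:ℝ) < 2*ν+1 := by linarith
  have hq : (0:ℝ) < 2*ν+3 := by linarith
  have h2 : G ^ (2*ν+1) ≤ Q ^ (2*ν+1) := Real.rpow_le_rpow hG.le hGQ.le hp.le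
  have h3 : (2*(ν+1)/x + G) ^ (2*ν+3) ≤ (A/B) ^ (2*ν+3) := by
    apply Real.rpow_le_rpow (by positivity) _ hq.le
    rw [← hAB]
    linarith
  have h4 : 1 < Q ^ (2*ν+1) * (A/B) ^ (2*ν+3) := by
    calc (1:ℝ) < G ^ (2*ν+1) * (2*(ν+1)/x + G) ^ (2*ν+3) := hyp
    _ ≤ Q ^ (2*ν+1) * (A/B) ^ (2*ν+3) := by
        apply mul_le_mul h2 h3 (by positivity) (Real.rpow_nonneg hQ.le _)
  have hAq : (0:ℝ) < A ^ (2*ν+3) := Real.rpow_pos_of_pos hA _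
  have hBq : (0:ℝ) < B ^ (2*ν+3) := Real.rpow_pos_of_pos hB _
  have hBp : (0:ℝ) < B ^ (2*ν+1) := Real.rpow_pos_of_pos hB _
  have h5 : B ^ (2*ν+3) < Q ^ (2*ν+1) * A ^ (2*ν+3) := by
    have hdiv : (A/B) ^ (2*ν+3) = A ^ (2*ν+3) / B ^ (2*ν+3) :=
      Real.div_rpow hA.le hB.le _
    rw [hdiv, mul_div_assoc'] at h4
    exact (one_lt_div hBq).mp h4
  constructor
  · rw [hPdef]
    rw [Real.div_rpow hB.le hA.le, div_lt_iff₀ hAq]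
    exact h5
  · have hCQ : C = Q * B := by rw [hQdef]; field_simp
    have hCp : C ^ (2*ν+1) = Q ^ (2*ν+1) * B ^ (2*ν+1) := by
      rw [hCQ, Real.mul_rpow hQ.le hB.le]
    have h6 : B ^ (2*ν+3) * B ^ (2*ν+1) < (Q ^ (2*ν+1) * A ^ (2*ν+3)) * B ^ (2*ν+1) :=
      mul_lt_mul_of_pos_right h5 hBp
    have h7 : B ^ (4*ν+4) = B ^ (2*ν+3) * B ^ (2*ν+1) := by
      rw [← Real.rpow_add hB]
      ring_nf
    rw [h7, hCp]
    calc B ^ (2*ν+3) * B ^ (2*ν+1) < (Q ^ (2*ν+1) * A ^ (2*ν+3)) * B ^ (2*ν+1) := h6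
    _ = Q ^ (2*ν+1) * B ^ (2*ν+1) * A ^ (2*ν+3) := by ring
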